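/- Let H be a self-adjoint operator on a separable Hilbert space with orthonormal basis {δ_x}, and let (Q, P) be complementary orthogonal projections. For δ_x ∈ ran(Q), δ_y ∈ ran(P), and E ∉ σ(H) real such that P(H−E)P is invertible on ran(P), one has |⟨δ_x,(H−E)^{-1}δ_y⟩| ≤ ∑_{δ_u ∈ ran(Q), δ_v ∈ ran(P)} |⟨δ_x,(H−E)^{-1}δ_u⟩| · |⟨δ_u, H δ_v⟩| · |⟨δ_v, (P(H−E)P)^{-1} δ_y⟩|. -/

import Mathlib

set_option maxHeartbeats 1000000

noncomputable def delta {X : Type*} [DecidableEq X] (x : X) : lp (fun _ : X => ℂ) 2 :=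
  lp.single 2 x 1

open scoped ENNReal

private lemma hasSum_nnnorm_le' {ι : Type*} {f : ι → ℂ} {a : ℂ} (h : HasSum f a) :
    (‖a‖₊ : ℝ≥0∞) ≤ ∑' i, (‖f i‖₊ : ℝ≥0∞) := by
  by_cases hs : Summable fun i => ‖f i‖₊
  · rw [← ENNReal.coe_tsum hs]
    have h2 : ‖a‖₊ ≤ ∑' i, ‖f i‖₊ := by
      rw [← h.tsum_eq]; exact nnnorm_tsum_le hs
    exact_mod_cast h2
  · have ht : (∑' i, (‖f i‖₊ : ℝ≥0∞)) = ⊤ := by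
      by_contra h'
      exact hs (ENNReal.tsum_coe_ne_top_iff_summable.mp h')
    simp [ht]

private lemma inner_delta_left' {X : Type*} [DecidableEq X] (v : X)
    (f : lp (fun _ : X => ℂ) 2) : (inner ℂ (delta v) f : ℂ) = f v := by
  simp [delta, lp.inner_single_left, RCLike.inner_apply]

private lemma inner_delta_right' {X : Type*} [DecidableEq X] (f : lp (fun _ : X => ℂ) 2)
    (v : X) : (inner ℂ f (delta v) : ℂ) = (starRingEnd ℂ) (f v) := by
  simp [delta, lp.inner_single_right, RCLike.inner_apply]

private lemma hasSum_inner_delta {X : Type*} [DecidableEq X] (f g : lp (fun _ : X => ℂ) 2) :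
    HasSum (fun w : X => (inner ℂ f (delta w) : ℂ) * (inner ℂ (delta w) g : ℂ))
      (inner ℂ f g : ℂ) := by
  have h := lp.hasSum_inner (𝕜 := ℂ) f g
  have e : (fun w : X => (inner ℂ f (delta w) : ℂ) * (inner ℂ (delta w) g : ℂ))
      = fun i => (inner ℂ (f i) (g i) : ℂ) := by
    funext w
    rw [inner_delta_right', inner_delta_left']
    simp [RCLike.inner_apply, mul_comm]
  rw [e]; exact h

private lemma sa_swap {X : Type*} {T : lp (fun _ : X => ℂ) 2 →L[ℂ] lp (fun _ : X => ℂ) 2}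
    (hT : IsSelfAdjoint T) (a b : lp (fun _ : X => ℂ) 2) :
    (inner ℂ (T a) b : ℂ) = inner ℂ a (T b) := by
  conv_lhs => rw [← hT.adjoint_eq]
  exact ContinuousLinearMap.adjoint_inner_left T b a

theorem stmt4 {X : Type*} [Countable X] [DecidableEq X]
    (H G Gp P Q : lp (fun _ : X => ℂ) 2 →L[ℂ] lp (fun _ : X => ℂ) 2)
    (hH : IsSelfAdjoint H) (hP : IsSelfAdjoint P) (hQ : IsSelfAdjoint Q)
    (hPidem : P ∘L P = P) (hQidem : Q ∘L Q = Q) (hPQ : P + Q = 1)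
    (hbasis : ∀ u : X, P (delta u) = delta u ∨ Q (delta u) = delta u)
    (E : ℝ)
    (hG1 : (H - (E : ℂ) • 1) ∘L G = 1) (hG2 : G ∘L (H - (E : ℂ) • 1) = 1)
    (hGp1 : (P ∘L (H - (E : ℂ) • 1) ∘L P) ∘L Gp = P)
    (hGp2 : Gp ∘L (P ∘L (H - (E : ℂ) • 1) ∘L P) = P)
    (hGpP : P ∘L Gp = Gp) (hGpP' : Gp ∘L P = Gp)
    (x y : X) (hx : Q (delta x) = delta x) (hy : P (delta y) = delta y) :
    (‖(inner ℂ (delta x) (G (delta y)) : ℂ)‖₊ : ENNReal)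
      ≤ ∑' (u : {u : X // Q (delta u) = delta u})
          (v : {v : X // P (delta v) = delta v}),
          (‖(inner ℂ (delta x) (G (delta u.1)) : ℂ)‖₊ : ENNReal)
          * (‖(inner ℂ (delta u.1) (H (delta v.1)) : ℂ)‖₊ : ENNReal)
          * (‖(inner ℂ (delta v.1) (Gp (delta y)) : ℂ)‖₊ : ENNReal) := by
  classical
  set A : lp (fun _ : X => ℂ) 2 →L[ℂ] lp (fun _ : X => ℂ) 2 := H - (E : ℂ) • 1 with hA_def
  -- turn compositions into products
  have hG1' : A * G = 1 := hG1
  have hG2' : G * A = 1 := hG2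
  have hQidem' : Q * Q = Q := hQidem
  have hPidem' : P * P = P := hPidem
  have hGpP1 : P * Gp = Gp := hGpP
  have hGpP1' : Gp * P = Gp := hGpP'
  have hGp1' : (P * A * P) * Gp = P := by
    have h : P * (A * (P * Gp)) = P := hGp1
    calc (P * A * P) * Gp = P * (A * (P * Gp)) := by simp only [mul_assoc]
      _ = P := h
  -- projections are complementary
  have hQP : Q * P = 0 := by
    have h := congrArg (fun T => Q * T) hPQ
    simp only [mul_add, hQidem', mul_one] at h
    exact add_eq_right.mp h
  have hPQ0 : P * Q = 0 := by
    have h := congrArg (fun T => P * T) hPQ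
    simp only [mul_add, hPidem', mul_one] at h
    exact add_eq_left.mp h
  -- A is self-adjoint
  have hA : IsSelfAdjoint A := by
    refine hH.sub ?_
    rw [IsSelfAdjoint, star_smul, star_one, Complex.star_def, Complex.conj_ofReal]
  -- G is self-adjoint
  have hAsG : A * star G = 1 := by
    have h := congrArg star hG2'
    rwa [star_mul, hA.star_eq, star_one] at h
  have hGsa : IsSelfAdjoint G := by
    have : star G = G := by
      calc star G = (G * A) * star G := by rw [hG2', one_mul]
        _ = G * (A * star G) := by rw [mul_assoc]
        _ = G := by rw [hAsG, mul_one]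
    exact this
  -- P A P is self-adjoint
  have hPAP : IsSelfAdjoint (P * A * P) := by
    rw [IsSelfAdjoint]
    simp only [star_mul, hA.star_eq, hP.star_eq, mul_assoc]
  -- Gp is self-adjoint
  have hGpsa : IsSelfAdjoint Gp := by
    have e2 : star Gp * P = star Gp := by
      have h := congrArg star hGpP1
      rwa [star_mul, hP.star_eq] at h
    have e1 : star Gp * (P * A * P) = P := by
      have h := congrArg star hGp1'
      rwa [star_mul, hPAP.star_eq, hP.star_eq] at h
    have e3 : star Gp = star Gp * ((P * A * P) * Gp) := by rw [hGp1']; exact e2.symm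
    have : star Gp = Gp := by
      calc star Gp = star Gp * ((P * A * P) * Gp) := e3
        _ = (star Gp * (P * A * P)) * Gp := by simp only [mul_assoc]
        _ = P * Gp := by rw [e1]
        _ = Gp := hGpP1
    exact this
  -- geometric resolvent operator identity
  have hPAGp : P * (A * Gp) = P := by
    calc P * (A * Gp) = P * (A * (P * Gp)) := by rw [hGpP1]
      _ = (P * A * P) * Gp := by simp only [mul_assoc]
      _ = P := hGp1'
  have hQGp : Q * Gp = 0 := by
    calc Q * Gp = Q * (P * Gp) := by rw [hGpP1]
      _ = (Q * P) * Gp := by rw [mul_assoc]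
      _ = 0 := by rw [hQP, zero_mul]
  have hQAGp : Q * (A * Gp) = Q * (H * Gp) := by
    have hAG : A * Gp = H * Gp - (E : ℂ) • Gp := by
      rw [hA_def, sub_mul, smul_mul_assoc, one_mul]
    rw [hAG, mul_sub, mul_smul_comm, hQGp, smul_zero, sub_zero]
  have hAGp : A * Gp = P + Q * (H * Gp) := by
    calc A * Gp = 1 * (A * Gp) := (one_mul _).symm
      _ = (P + Q) * (A * Gp) := by rw [hPQ]
      _ = P * (A * Gp) + Q * (A * Gp) := add_mul _ _ _
      _ = P + Q * (H * Gp) := by rw [hPAGp, hQAGp]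
  have hGP : G * P = Gp - G * (Q * (H * Gp)) := by
    have h : G * P + G * (Q * (H * Gp)) = Gp := by
      calc G * P + G * (Q * (H * Gp)) = G * (P + Q * (H * Gp)) := (mul_add _ _ _).symm
        _ = G * (A * Gp) := by rw [hAGp]
        _ = (G * A) * Gp := (mul_assoc _ _ _).symm
        _ = Gp := by rw [hG2', one_mul]
    exact eq_sub_of_add_eq h
  -- apply to delta y
  have hGdy : G (delta y) = Gp (delta y) - G (Q (H (Gp (delta y)))) := by
    have h1 : G (delta y) = (G * P) (delta y) := by
      rw [ContinuousLinearMap.mul_apply, hy]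
    rw [h1, hGP]
    simp [ContinuousLinearMap.sub_apply, ContinuousLinearMap.mul_apply]
  -- first term vanishes
  have hPdx : P (delta x) = 0 := by
    have h : P (delta x) = (P * Q) (delta x) := by rw [ContinuousLinearMap.mul_apply, hx]
    rw [h, hPQ0, ContinuousLinearMap.zero_apply]
  have hPw : P (Gp (delta y)) = Gp (delta y) := by
    rw [← ContinuousLinearMap.mul_apply, hGpP1]
  have hinner0 : (inner ℂ (delta x) (Gp (delta y)) : ℂ) = 0 := by
    rw [← hPw, ← sa_swap hP, hPdx, inner_zero_left]
  have hsn : ‖(inner ℂ (delta x) (G (delta y)) : ℂ)‖₊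
      = ‖(inner ℂ (delta x) (G (Q (H (Gp (delta y))))) : ℂ)‖₊ := by
    rw [hGdy, inner_sub_right, hinner0, zero_sub, nnnorm_neg]
  -- vanishing lemmas
  have hz_zero : ∀ u : X, P (delta u) = delta u →
      (inner ℂ (delta u) (Q (H (Gp (delta y)))) : ℂ) = 0 := by
    intro u hu
    have hQdu : Q (delta u) = 0 := by
      conv_lhs => rw [← hu]
      rw [← ContinuousLinearMap.mul_apply, hQP, ContinuousLinearMap.zero_apply]
    rw [← sa_swap hQ, hQdu, inner_zero_left]
  have hw_zero : ∀ v : X, Q (delta v) = delta v →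
      (inner ℂ (delta v) (Gp (delta y)) : ℂ) = 0 := by
    intro v hv
    have hPdv : P (delta v) = 0 := by
      conv_lhs => rw [← hv]
      rw [← ContinuousLinearMap.mul_apply, hPQ0, ContinuousLinearMap.zero_apply]
    rw [← hPw, ← sa_swap hP, hPdv, inner_zero_left]
  -- inner-sum bound for u in range of Q
  have hz_bound : ∀ u : X, Q (delta u) = delta u →
      (‖(inner ℂ (delta u) (Q (H (Gp (delta y)))) : ℂ)‖₊ : ℝ≥0∞)
        ≤ ∑' (v : {v : X // P (delta v) = delta v}),
            (‖(inner ℂ (delta u) (H (delta v.1)) : ℂ)‖₊ : ℝ≥0∞)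
              * (‖(inner ℂ (delta v.1) (Gp (delta y)) : ℂ)‖₊ : ℝ≥0∞) := by
    intro u hu
    have h1 : (inner ℂ (delta u) (Q (H (Gp (delta y)))) : ℂ)
        = inner ℂ (H (delta u)) (Gp (delta y)) := by
      rw [← sa_swap hQ, hu, ← sa_swap hH]
    rw [h1]
    have h2 := hasSum_nnnorm_le' (hasSum_inner_delta (H (delta u)) (Gp (delta y)))
    refine h2.trans ?_
    have h3 : (∑' (v : X), (‖(inner ℂ (H (delta u)) (delta v) : ℂ)
          * (inner ℂ (delta v) (Gp (delta y)) : ℂ)‖₊ : ℝ≥0∞))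
        = ∑' (v : X), (‖(inner ℂ (delta u) (H (delta v)) : ℂ)‖₊ : ℝ≥0∞)
            * (‖(inner ℂ (delta v) (Gp (delta y)) : ℂ)‖₊ : ℝ≥0∞) := by
      refine tsum_congr fun v => ?_
      rw [nnnorm_mul, ENNReal.coe_mul, sa_swap hH]
    rw [h3]
    refine le_of_eq ?_
    refine (tsum_subtype_eq_of_support_subset ?_).symm
    intro v hv
    simp only [Function.mem_support] at hv
    by_contra hmem
    rcases hbasis v with h | h
    · exact hmem h
    · exact hv (by rw [hw_zero v h]; simp)
  -- main computation
  calc (‖(inner ℂ (delta x) (G (delta y)) : ℂ)‖₊ : ℝ≥0∞)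
      = ‖(inner ℂ (G (delta x)) (Q (H (Gp (delta y)))) : ℂ)‖₊ := by
        rw [hsn, sa_swap hGsa]
    _ ≤ ∑' (u : X), (‖(inner ℂ (delta x) (G (delta u)) : ℂ)‖₊ : ℝ≥0∞)
          * (‖(inner ℂ (delta u) (Q (H (Gp (delta y)))) : ℂ)‖₊ : ℝ≥0∞) := by
        have h := hasSum_nnnorm_le'
          (hasSum_inner_delta (G (delta x)) (Q (H (Gp (delta y)))))
        refine h.trans_eq (tsum_congr fun u => ?_)
        rw [nnnorm_mul, ENNReal.coe_mul, sa_swap hGsa]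
    _ = ∑' (u : {u : X // Q (delta u) = delta u}),
          (‖(inner ℂ (delta x) (G (delta u.1)) : ℂ)‖₊ : ℝ≥0∞)
          * (‖(inner ℂ (delta u.1) (Q (H (Gp (delta y)))) : ℂ)‖₊ : ℝ≥0∞) := by
        refine (tsum_subtype_eq_of_support_subset ?_).symm
        intro u hu
        simp only [Function.mem_support] at hu
        by_contra hmem
        rcases hbasis u with h | h
        · exact hu (by rw [hz_zero u h]; simp)
        · exact hmem h
    _ ≤ ∑' (u : {u : X // Q (delta u) = delta u}),
          (‖(inner ℂ (delta x) (G (delta u.1)) : ℂ)‖₊ : ℝ≥0∞)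
          * ∑' (v : {v : X // P (delta v) = delta v}),
              (‖(inner ℂ (delta u.1) (H (delta v.1)) : ℂ)‖₊ : ℝ≥0∞)
              * (‖(inner ℂ (delta v.1) (Gp (delta y)) : ℂ)‖₊ : ℝ≥0∞) := by
        exact ENNReal.tsum_le_tsum fun u => mul_le_mul_right (hz_bound u.1 u.2) _
    _ = ∑' (u : {u : X // Q (delta u) = delta u})
          (v : {v : X // P (delta v) = delta v}),
          (‖(inner ℂ (delta x) (G (delta u.1)) : ℂ)‖₊ : ℝ≥0∞)
          * (‖(inner ℂ (delta u.1) (H (delta v.1)) : ℂ)‖₊ : ℝ≥0∞)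
          * (‖(inner ℂ (delta v.1) (Gp (delta y)) : ℂ)‖₊ : ℝ≥0∞) := by
        refine tsum_congr fun u => ?_
        rw [← ENNReal.tsum_mul_left]
        exact tsum_congr fun v => (mul_assoc _ _ _).symm
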